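/- arXiv:2411.06219 — 4 statements merged into one kernel-verified Lean document; each statement's English description precedes it below -/
import Mathlib

section
/- Fixed-endpoint minimum-energy optimality (core of Theorem 1): Let τ₁ > 0, x₀, x₁ ∈ ℝⁿ, and suppose the weighted controllability Gramian G(τ₁) is invertible. Define the control u*(t) = R⁻¹ Bᵀ exp(Aᵀ(τ₁ − t)) G(τ₁)⁻¹ (x₁ − x̂(τ₁)) for t ∈ [0, τ₁]. Then for every continuous control u : [0, τ₁] → ℝᵐ whose response x_u(t) = exp(A t) x₀ + ∫₀ᵗ exp(A(t − s)) (B u(s) + d) ds satisfies x_u(τ₁) = x₁, one has ∫₀^{τ₁} u*(t)ᵀ R u*(t) dt ≤ ∫₀^{τ₁} u(t)ᵀ R u(t) dt. -/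
open MeasureTheory Matrix

attribute [local instance] Matrix.normedAddCommGroup Matrix.normedSpace

/-- The weighted controllability Gramian `G(τ) = ∫₀^τ e^{A(τ-s)} B R⁻¹ Bᵀ e^{Aᵀ(τ-s)} ds`. -/
noncomputable def gramian {n m : ℕ} (A : Matrix (Fin n) (Fin n) ℝ) (B : Matrix (Fin n) (Fin m) ℝ)
    (R : Matrix (Fin m) (Fin m) ℝ) (τ : ℝ) : Matrix (Fin n) (Fin n) ℝ :=
  ∫ s in (0:ℝ)..τ,
    NormedSpace.exp ((τ - s) • A) * B * R⁻¹ * Bᵀ * NormedSpace.exp ((τ - s) • Aᵀ)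

/-- The free response `x̂(τ) = e^{Aτ} x₀ + ∫₀^τ e^{A(τ-s)} d ds`. -/
noncomputable def freeResp {n : ℕ} (A : Matrix (Fin n) (Fin n) ℝ) (x₀ d : Fin n → ℝ) (τ : ℝ) :
    Fin n → ℝ :=
  (NormedSpace.exp (τ • A)).mulVec x₀ +
    ∫ s in (0:ℝ)..τ, (NormedSpace.exp ((τ - s) • A)).mulVec d

/-- Continuity of `t ↦ exp((τ - t) • A)` for matrices. -/
lemma continuous_exp_shift_smul {n : ℕ} (A : Matrix (Fin n) (Fin n) ℝ) (τ : ℝ) :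
    Continuous fun t : ℝ => NormedSpace.exp ((τ - t) • A) := by
  letI : SeminormedRing (Matrix (Fin n) (Fin n) ℝ) := Matrix.linftyOpSemiNormedRing
  letI : NormedRing (Matrix (Fin n) (Fin n) ℝ) := Matrix.linftyOpNormedRing
  letI : NormedAlgebra ℝ (Matrix (Fin n) (Fin n) ℝ) := Matrix.linftyOpNormedAlgebra
  letI : NormedAddCommGroup (Matrix (Fin n) (Fin n) ℝ) := Matrix.linftyOpNormedAddCommGroup
  letI : NormedSpace ℝ (Matrix (Fin n) (Fin n) ℝ) := Matrix.linftyOpNormedSpace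
  haveI : CompleteSpace (Matrix (Fin n) (Fin n) ℝ) := FiniteDimensional.complete ℝ _
  have hc : Continuous (NormedSpace.exp : Matrix (Fin n) (Fin n) ℝ → Matrix (Fin n) (Fin n) ℝ) := by
    rw [← continuousOn_univ, ← Metric.eball_top_eq_univ (0 : Matrix (Fin n) (Fin n) ℝ),
      ← NormedSpace.expSeries_radius_eq_top ℝ (Matrix (Fin n) (Fin n) ℝ)]
    exact NormedSpace.continuousOn_exp (𝕂 := ℝ)
  exact hc.comp
    ((continuous_const.sub continuous_id).smul continuous_const)

/-- `M ↦ M *ᵥ v` as a continuous linear map. -/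
noncomputable def mulVecCLM {n m : ℕ} (v : Fin m → ℝ) :
    Matrix (Fin n) (Fin m) ℝ →L[ℝ] (Fin n → ℝ) :=
  LinearMap.toContinuousLinearMap
    { toFun := fun M => M.mulVec v
      map_add' := fun M N => Matrix.add_mulVec M N v
      map_smul' := fun c M => Matrix.smul_mulVec c M v }

/-- `x ↦ v ⬝ᵥ x` as a continuous linear map. -/
noncomputable def dotCLM {n : ℕ} (v : Fin n → ℝ) : (Fin n → ℝ) →L[ℝ] ℝ :=
  LinearMap.toContinuousLinearMap
    { toFun := fun x => v ⬝ᵥ x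
      map_add' := fun x y => dotProduct_add v x y
      map_smul' := fun c x => dotProduct_smul c v x }

lemma mulVecCLM_apply {n m : ℕ} (v : Fin m → ℝ) (M : Matrix (Fin n) (Fin m) ℝ) :
    mulVecCLM v M = M.mulVec v := rfl

lemma dotCLM_apply {n : ℕ} (v x : Fin n → ℝ) : dotCLM v x = v ⬝ᵥ x := rfl

set_option maxHeartbeats 1000000 in
/-- Fixed-endpoint minimum-energy optimality: the Gramian-form control `u*` steers the system
and has energy no larger than that of any continuous control whose response reaches `x₁`
at time `τ₁`. -/
theorem gramian_control_minimum_energy {n m : ℕ}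
    (A : Matrix (Fin n) (Fin n) ℝ) (B : Matrix (Fin n) (Fin m) ℝ)
    (R : Matrix (Fin m) (Fin m) ℝ) (hR : R.PosDef) (x₀ d : Fin n → ℝ)
    (τ₁ : ℝ) (hτ₁ : 0 < τ₁) (x₁ : Fin n → ℝ)
    (hG : IsUnit (gramian A B R τ₁))
    (ustar : ℝ → Fin m → ℝ)
    (hustar : ∀ t, ustar t =
      (R⁻¹ * Bᵀ * NormedSpace.exp ((τ₁ - t) • Aᵀ)).mulVec
        ((gramian A B R τ₁)⁻¹.mulVec (x₁ - freeResp A x₀ d τ₁)))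
    (u : ℝ → Fin m → ℝ) (hu : ContinuousOn u (Set.Icc 0 τ₁))
    (xu : ℝ → Fin n → ℝ)
    (hxu : ∀ t, xu t = (NormedSpace.exp (t • A)).mulVec x₀ +
      ∫ s in (0:ℝ)..t, (NormedSpace.exp ((t - s) • A)).mulVec (B.mulVec (u s) + d))
    (hreach : xu τ₁ = x₁) :
    (∫ t in (0:ℝ)..τ₁, ustar t ⬝ᵥ R.mulVec (ustar t)) ≤
      ∫ t in (0:ℝ)..τ₁, u t ⬝ᵥ R.mulVec (u t) := by
  have hτ : (0:ℝ) ≤ τ₁ := hτ₁.le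
  set y : Fin n → ℝ := x₁ - freeResp A x₀ d τ₁ with hy
  set w : Fin n → ℝ := (gramian A B R τ₁)⁻¹.mulVec y with hw
  set E : ℝ → Matrix (Fin n) (Fin n) ℝ := fun t => NormedSpace.exp ((τ₁ - t) • A) with hE
  set F : ℝ → Matrix (Fin n) (Fin n) ℝ := fun t => NormedSpace.exp ((τ₁ - t) • Aᵀ) with hF
  have hEc : Continuous E := continuous_exp_shift_smul A τ₁
  have hFc : Continuous F := continuous_exp_shift_smul Aᵀ τ₁
  have hRdet : IsUnit R.det := hR.det_pos.ne'.isUnit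
  have hRt : Rᵀ = R := by
    rw [← Matrix.conjTranspose_eq_transpose_of_trivial]; exact hR.1
  have hRinvT : (R⁻¹)ᵀ = R⁻¹ := by
    rw [Matrix.transpose_nonsing_inv, hRt]
  have hFT : ∀ t, (F t)ᵀ = E t := by
    intro t
    rw [hF, hE]
    simp only
    rw [← Matrix.transpose_smul, Matrix.exp_transpose, Matrix.transpose_transpose]
  -- the cross-term pointwise identity
  have hstar : ∀ t (z : Fin m → ℝ), ustar t ⬝ᵥ R.mulVec z = w ⬝ᵥ (E t * B).mulVec z := by
    intro t z
    rw [hustar, Matrix.dotProduct_mulVec w, Matrix.dotProduct_mulVec,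
      ← Matrix.vecMul_transpose, Matrix.vecMul_vecMul]
    congr 2
    rw [Matrix.transpose_mul, Matrix.transpose_mul, hRinvT, hFT, Matrix.transpose_transpose]
    simp [Matrix.mul_assoc, Matrix.nonsing_inv_mul R hRdet]
  -- continuity of ustar
  have hustarc : Continuous ustar := by
    have : Continuous fun t => (mulVecCLM (n := m) w) (R⁻¹ * Bᵀ * F t) :=
      (mulVecCLM w).continuous.comp ((continuous_const.matrix_mul hFc))
    convert this using 1
    funext t
    rw [hustar]
    rfl
  -- basic integrands and their integrability
  have hmv : Continuous fun p : Matrix (Fin n) (Fin m) ℝ × (Fin m → ℝ) => p.1 *ᵥ p.2 :=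
    Continuous.matrix_mulVec continuous_fst continuous_snd
  have hfu : ContinuousOn (fun t => (E t * B) *ᵥ u t) (Set.Icc 0 τ₁) :=
    hmv.comp_continuousOn' (f := fun t => (E t * B, u t)) (((hEc.matrix_mul continuous_const).continuousOn).prodMk hu)
  have hfu' : IntervalIntegrable (fun t => (E t * B) *ᵥ u t) volume 0 τ₁ :=
    (hfu.mono (by rw [Set.uIcc_of_le hτ])).intervalIntegrable
  have hfd : Continuous fun t => (E t) *ᵥ d := hEc.matrix_mulVec continuous_const
  have hfd' : IntervalIntegrable (fun t => (E t) *ᵥ d) volume 0 τ₁ :=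
    hfd.intervalIntegrable 0 τ₁
  have hfustar : Continuous fun t => (E t * B) *ᵥ ustar t :=
    (hEc.matrix_mul continuous_const).matrix_mulVec hustarc
  have hfustar' : IntervalIntegrable (fun t => (E t * B) *ᵥ ustar t) volume 0 τ₁ :=
    hfustar.intervalIntegrable 0 τ₁
  -- the reachability identity for u
  have h1 : (∫ t in (0:ℝ)..τ₁, (E t * B) *ᵥ u t) = y := by
    have hx := (hxu τ₁).symm.trans hreach
    have hsplit : (∫ s in (0:ℝ)..τ₁, (NormedSpace.exp ((τ₁ - s) • A)).mulVec
        (B.mulVec (u s) + d)) =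
        (∫ t in (0:ℝ)..τ₁, (E t * B) *ᵥ u t) + ∫ t in (0:ℝ)..τ₁, (E t) *ᵥ d := by
      rw [← intervalIntegral.integral_add hfu' hfd']
      apply intervalIntegral.integral_congr
      intro s _
      simp only [Matrix.mulVec_add, Matrix.mulVec_mulVec]
      rfl
    rw [hsplit] at hx
    rw [hy, freeResp]
    have : (∫ t in (0:ℝ)..τ₁, E t *ᵥ d) = ∫ s in (0:ℝ)..τ₁,
        (NormedSpace.exp ((τ₁ - s) • A)).mulVec d := rfl
    rw [← hx, this]
    abel
  -- the reachability identity for ustar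
  have h2 : (∫ t in (0:ℝ)..τ₁, (E t * B) *ᵥ ustar t) = y := by
    have hptw : ∀ t, (E t * B) *ᵥ ustar t =
        (mulVecCLM (n := n) w) (E t * B * R⁻¹ * Bᵀ * F t) := by
      intro t
      rw [hustar, Matrix.mulVec_mulVec]
      show _ = (E t * B * R⁻¹ * Bᵀ * F t) *ᵥ w
      congr 1
      simp only [Matrix.mul_assoc]
      rfl
    have hMc : Continuous fun t => E t * B * R⁻¹ * Bᵀ * F t :=
      ((((hEc.matrix_mul continuous_const).matrix_mul
        continuous_const).matrix_mul continuous_const).matrix_mul hFc)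
    have hint := hMc.intervalIntegrable (μ := volume) 0 τ₁
    calc (∫ t in (0:ℝ)..τ₁, (E t * B) *ᵥ ustar t)
        = ∫ t in (0:ℝ)..τ₁, (mulVecCLM (n := n) w) (E t * B * R⁻¹ * Bᵀ * F t) := by
          apply intervalIntegral.integral_congr; intro t _; exact hptw t
      _ = (mulVecCLM (n := n) w) (∫ t in (0:ℝ)..τ₁, E t * B * R⁻¹ * Bᵀ * F t) :=
          (mulVecCLM w).intervalIntegral_comp_comm hint
      _ = (gramian A B R τ₁) *ᵥ w := rfl
      _ = y := by
          rw [hw, Matrix.mulVec_mulVec,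
            Matrix.mul_nonsing_inv _ ((Matrix.isUnit_iff_isUnit_det _).mp hG),
            Matrix.one_mulVec]
  -- the cross term vanishes
  have hcross : (∫ t in (0:ℝ)..τ₁, ustar t ⬝ᵥ R.mulVec (u t - ustar t)) = 0 := by
    have hptw : ∀ t, ustar t ⬝ᵥ R.mulVec (u t - ustar t) =
        (dotCLM w) ((E t * B) *ᵥ u t - (E t * B) *ᵥ ustar t) := by
      intro t
      rw [hstar t, Matrix.mulVec_sub]
      rfl
    have hint : IntervalIntegrable (fun t => (E t * B) *ᵥ u t - (E t * B) *ᵥ ustar t)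
        volume 0 τ₁ := hfu'.sub hfustar'
    calc (∫ t in (0:ℝ)..τ₁, ustar t ⬝ᵥ R.mulVec (u t - ustar t))
        = ∫ t in (0:ℝ)..τ₁, (dotCLM w) ((E t * B) *ᵥ u t - (E t * B) *ᵥ ustar t) := by
          apply intervalIntegral.integral_congr; intro t _; exact hptw t
      _ = (dotCLM w) (∫ t in (0:ℝ)..τ₁, ((E t * B) *ᵥ u t - (E t * B) *ᵥ ustar t)) :=
          (dotCLM w).intervalIntegral_comp_comm hint
      _ = (dotCLM w) ((∫ t in (0:ℝ)..τ₁, (E t * B) *ᵥ u t) -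
            ∫ t in (0:ℝ)..τ₁, (E t * B) *ᵥ ustar t) := by
          rw [intervalIntegral.integral_sub hfu' hfustar']
      _ = 0 := by rw [h1, h2, sub_self]; exact map_zero _
  -- energy integrands: continuity
  have hdp : Continuous fun p : (Fin m → ℝ) × (Fin m → ℝ) => p.1 ⬝ᵥ R.mulVec p.2 :=
    Continuous.dotProduct continuous_fst
      (Continuous.matrix_mulVec continuous_const continuous_snd)
  have hIuu : IntervalIntegrable (fun t => u t ⬝ᵥ R.mulVec (u t)) volume 0 τ₁ :=
    (((hdp.comp_continuousOn (hu.prodMk hu)).mono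
      (by rw [Set.uIcc_of_le hτ]))).intervalIntegrable
  have hIss : IntervalIntegrable (fun t => ustar t ⬝ᵥ R.mulVec (ustar t)) volume 0 τ₁ :=
    ((hdp.comp (hustarc.prodMk hustarc))).intervalIntegrable 0 τ₁
  have hud : ContinuousOn (fun t => u t - ustar t) (Set.Icc 0 τ₁) :=
    hu.sub hustarc.continuousOn
  have hIdd : IntervalIntegrable
      (fun t => (u t - ustar t) ⬝ᵥ R.mulVec (u t - ustar t)) volume 0 τ₁ :=
    (((hdp.comp_continuousOn (hud.prodMk hud)).mono
      (by rw [Set.uIcc_of_le hτ]))).intervalIntegrable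
  have hIsd : IntervalIntegrable
      (fun t => ustar t ⬝ᵥ R.mulVec (u t - ustar t)) volume 0 τ₁ :=
    (((hdp.comp_continuousOn (hustarc.continuousOn.prodMk hud)).mono
      (by rw [Set.uIcc_of_le hτ]))).intervalIntegrable
  -- pointwise energy expansion
  have hexp : ∀ t, u t ⬝ᵥ R.mulVec (u t) =
      ustar t ⬝ᵥ R.mulVec (ustar t) +
      ((u t - ustar t) ⬝ᵥ R.mulVec (u t - ustar t) +
        2 * (ustar t ⬝ᵥ R.mulVec (u t - ustar t))) := by
    intro t
    have hsymm : u t ⬝ᵥ R.mulVec (ustar t) = ustar t ⬝ᵥ R.mulVec (u t) := by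
      rw [Matrix.dotProduct_mulVec, ← Matrix.mulVec_transpose, hRt, dotProduct_comm]
    simp only [Matrix.mulVec_sub, dotProduct_sub, sub_dotProduct]
    linear_combination hsymm
  -- put it together
  have hsum : (∫ t in (0:ℝ)..τ₁, u t ⬝ᵥ R.mulVec (u t)) =
      (∫ t in (0:ℝ)..τ₁, ustar t ⬝ᵥ R.mulVec (ustar t)) +
      ((∫ t in (0:ℝ)..τ₁, (u t - ustar t) ⬝ᵥ R.mulVec (u t - ustar t)) +
        2 * ∫ t in (0:ℝ)..τ₁, ustar t ⬝ᵥ R.mulVec (u t - ustar t)) := by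
    rw [← intervalIntegral.integral_const_mul, ← intervalIntegral.integral_add hIdd
      (hIsd.const_mul 2), ← intervalIntegral.integral_add hIss (hIdd.add (hIsd.const_mul 2))]
    apply intervalIntegral.integral_congr
    intro t _
    exact hexp t
  have hnn : 0 ≤ ∫ t in (0:ℝ)..τ₁, (u t - ustar t) ⬝ᵥ R.mulVec (u t - ustar t) := by
    apply intervalIntegral.integral_nonneg hτ
    intro t _
    have := hR.posSemidef.dotProduct_mulVec_nonneg (u t - ustar t)
    simpa using this
  rw [hsum, hcross]
  linarith
end

section
/- Gramian steering (reachability part of Theorem 1): Let τ₁ > 0, x₀, x₁ ∈ ℝⁿ, and suppose the weighted controllability Gramian G(τ₁) is invertible. Define u(t) = R⁻¹ Bᵀ exp(Aᵀ(τ₁ − t)) G(τ₁)⁻¹ (x₁ − x̂(τ₁)). Then the response x(t) = exp(A t) x₀ + ∫₀ᵗ exp(A(t − s)) (B u(s) + d) ds satisfies x(0) = x₀ and x(τ₁) = x₁. -/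
open MeasureTheory Matrix

attribute [local instance] Matrix.normedAddCommGroup Matrix.normedSpace

section aux
attribute [local instance] Matrix.linftyOpNormedRing Matrix.linftyOpNormedAlgebra

lemma exp_cont {k : ℕ} (A : Matrix (Fin k) (Fin k) ℝ) (τ : ℝ) :
    Continuous fun s : ℝ => NormedSpace.exp ((τ - s) • A) :=
  (@NormedSpace.exp_continuous _ _ _ (FiniteDimensional.complete ℝ _)).comp (by fun_prop)
end aux

/-- Gramian steering: the Gramian-form control steers the system from `x₀` at time `0`
to `x₁` at time `τ₁`. -/
theorem gramian_control_steers {n m : ℕ}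
    (A : Matrix (Fin n) (Fin n) ℝ) (B : Matrix (Fin n) (Fin m) ℝ)
    (R : Matrix (Fin m) (Fin m) ℝ) (hR : R.PosDef) (x₀ d : Fin n → ℝ)
    (τ₁ : ℝ) (hτ₁ : 0 < τ₁) (x₁ : Fin n → ℝ)
    (hG : IsUnit (gramian A B R τ₁))
    (u : ℝ → Fin m → ℝ)
    (hu : ∀ t, u t =
      (R⁻¹ * Bᵀ * NormedSpace.exp ((τ₁ - t) • Aᵀ)).mulVec
        ((gramian A B R τ₁)⁻¹.mulVec (x₁ - freeResp A x₀ d τ₁)))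
    (x : ℝ → Fin n → ℝ)
    (hx : ∀ t, x t = (NormedSpace.exp (t • A)).mulVec x₀ +
      ∫ s in (0:ℝ)..t, (NormedSpace.exp ((t - s) • A)).mulVec (B.mulVec (u s) + d)) :
    x 0 = x₀ ∧ x τ₁ = x₁ := by
  set v : Fin n → ℝ := (gramian A B R τ₁)⁻¹.mulVec (x₁ - freeResp A x₀ d τ₁) with hv
  constructor
  · simp [hx 0, zero_smul, NormedSpace.exp_zero, Matrix.one_mulVec]
  -- continuity facts
  have hc1 : Continuous fun s : ℝ =>
      NormedSpace.exp ((τ₁ - s) • A) * B * R⁻¹ * Bᵀ * NormedSpace.exp ((τ₁ - s) • Aᵀ) := by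
    exact ((((exp_cont A τ₁).matrix_mul continuous_const).matrix_mul
      continuous_const).matrix_mul continuous_const).matrix_mul (exp_cont Aᵀ τ₁)
  have hc2 : Continuous fun s : ℝ => (NormedSpace.exp ((τ₁ - s) • A)).mulVec d := by
    exact (exp_cont A τ₁).matrix_mulVec continuous_const
  -- the continuous linear map M ↦ M.mulVec v
  let L : Matrix (Fin n) (Fin n) ℝ →L[ℝ] (Fin n → ℝ) :=
    LinearMap.toContinuousLinearMap
      { toFun := fun M => M.mulVec v
        map_add' := fun M N => Matrix.add_mulVec M N v
        map_smul' := fun c M => Matrix.smul_mulVec c M v }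
  letI : ENormedAddMonoid (Matrix (Fin n) (Fin n) ℝ) := NormedAddGroup.toENormedAddMonoid
  have hint1 : IntervalIntegrable (fun s : ℝ =>
      NormedSpace.exp ((τ₁ - s) • A) * B * R⁻¹ * Bᵀ * NormedSpace.exp ((τ₁ - s) • Aᵀ))
      volume 0 τ₁ := hc1.intervalIntegrable 0 τ₁
  have hint1' : IntervalIntegrable (fun s : ℝ =>
      ((NormedSpace.exp ((τ₁ - s) • A) * B * R⁻¹ * Bᵀ *
        NormedSpace.exp ((τ₁ - s) • Aᵀ)).mulVec v)) volume 0 τ₁ := by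
    have := (L.continuous.comp hc1).intervalIntegrable (μ := volume) 0 τ₁
    exact this
  have hint2 : IntervalIntegrable (fun s : ℝ => (NormedSpace.exp ((τ₁ - s) • A)).mulVec d)
      volume 0 τ₁ := hc2.intervalIntegrable 0 τ₁
  -- rewrite the integrand
  have key : (∫ s in (0:ℝ)..τ₁,
        (NormedSpace.exp ((τ₁ - s) • A)).mulVec (B.mulVec (u s) + d))
      = (gramian A B R τ₁).mulVec v +
        ∫ s in (0:ℝ)..τ₁, (NormedSpace.exp ((τ₁ - s) • A)).mulVec d := by
    have heq : ∀ s : ℝ, (NormedSpace.exp ((τ₁ - s) • A)).mulVec (B.mulVec (u s) + d)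
        = (NormedSpace.exp ((τ₁ - s) • A) * B * R⁻¹ * Bᵀ *
            NormedSpace.exp ((τ₁ - s) • Aᵀ)).mulVec v
          + (NormedSpace.exp ((τ₁ - s) • A)).mulVec d := by
      intro s
      rw [hu s, Matrix.mulVec_add, Matrix.mulVec_mulVec, Matrix.mulVec_mulVec]
      rw [← Matrix.mul_assoc, ← Matrix.mul_assoc]
    simp_rw [heq]
    rw [intervalIntegral.integral_add hint1' hint2]
    congr 1
    have := L.intervalIntegral_comp_comm hint1
    exact this
  rw [hx τ₁, key]
  have hGmul : (gramian A B R τ₁).mulVec v = x₁ - freeResp A x₀ d τ₁ := by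
    rw [hv, Matrix.mulVec_mulVec, Matrix.mul_nonsing_inv _ ((Matrix.isUnit_iff_isUnit_det _).mp hG),
      Matrix.one_mulVec]
  rw [hGmul]
  simp [freeResp]
  abel
end

section
/- Minimum-energy cost value: Let τ₁ > 0, x₀, x₁ ∈ ℝⁿ, and suppose the weighted controllability Gramian G(τ₁) is invertible. For the control u(t) = R⁻¹ Bᵀ exp(Aᵀ(τ₁ − t)) G(τ₁)⁻¹ (x₁ − x̂(τ₁)), the control energy satisfies ∫₀^{τ₁} u(t)ᵀ R u(t) dt = (x₁ − x̂(τ₁))ᵀ G(τ₁)⁻¹ (x₁ − x̂(τ₁)). -/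
open MeasureTheory Matrix

attribute [local instance] Matrix.normedAddCommGroup Matrix.normedSpace

private lemma quad_mulVec {k l : ℕ} (P : Matrix (Fin k) (Fin l) ℝ)
    (S : Matrix (Fin k) (Fin k) ℝ) (w : Fin l → ℝ) :
    (P.mulVec w) ⬝ᵥ S.mulVec (P.mulVec w) = w ⬝ᵥ (Pᵀ * S * P).mulVec w := by
  rw [Matrix.dotProduct_mulVec, ← Matrix.vecMul_transpose, Matrix.vecMul_vecMul,
    ← Matrix.dotProduct_mulVec, Matrix.mulVec_vecMul, Matrix.transpose_transpose]

/-- Minimum-energy cost value: the Gramian-form steering control has energy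
`(x₁ − x̂(τ₁))ᵀ G(τ₁)⁻¹ (x₁ − x̂(τ₁))`. -/
theorem gramian_control_energy_value {n m : ℕ}
    (A : Matrix (Fin n) (Fin n) ℝ) (B : Matrix (Fin n) (Fin m) ℝ)
    (R : Matrix (Fin m) (Fin m) ℝ) (hR : R.PosDef) (x₀ d : Fin n → ℝ)
    (τ₁ : ℝ) (hτ₁ : 0 < τ₁) (x₁ : Fin n → ℝ)
    (hG : IsUnit (gramian A B R τ₁))
    (u : ℝ → Fin m → ℝ)
    (hu : ∀ t, u t =
      (R⁻¹ * Bᵀ * NormedSpace.exp ((τ₁ - t) • Aᵀ)).mulVec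
        ((gramian A B R τ₁)⁻¹.mulVec (x₁ - freeResp A x₀ d τ₁))) :
    (∫ t in (0:ℝ)..τ₁, u t ⬝ᵥ R.mulVec (u t)) =
      (x₁ - freeResp A x₀ d τ₁) ⬝ᵥ
        (gramian A B R τ₁)⁻¹.mulVec (x₁ - freeResp A x₀ d τ₁) := by
  set v : Fin n → ℝ := x₁ - freeResp A x₀ d τ₁ with hv
  set G : Matrix (Fin n) (Fin n) ℝ := gramian A B R τ₁ with hGdef
  set w : Fin n → ℝ := G⁻¹.mulVec v with hw
  -- basic matrix facts
  have hRT : Rᵀ = R := hR.isHermitian.eq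
  have hRdet : IsUnit R.det := (Matrix.isUnit_iff_isUnit_det R).mp hR.isUnit
  have hRinvT : (R⁻¹)ᵀ = R⁻¹ := by rw [Matrix.transpose_nonsing_inv, hRT]
  have hRinvR : R⁻¹ * R * R⁻¹ = R⁻¹ := by
    rw [Matrix.nonsing_inv_mul R hRdet, Matrix.one_mul]
  -- the Gramian integrand
  set M : ℝ → Matrix (Fin n) (Fin n) ℝ := fun s =>
    NormedSpace.exp ((τ₁ - s) • A) * B * R⁻¹ * Bᵀ * NormedSpace.exp ((τ₁ - s) • Aᵀ)
    with hM
  -- pointwise identity for the energy integrand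
  have halg : ∀ X : Matrix (Fin n) (Fin n) ℝ,
      (R⁻¹ * Bᵀ * Xᵀ)ᵀ * R * (R⁻¹ * Bᵀ * Xᵀ) = X * B * R⁻¹ * Bᵀ * Xᵀ := by
    intro X
    have h2' : R⁻¹ * (R * (R⁻¹ * (Bᵀ * Xᵀ))) = R⁻¹ * (Bᵀ * Xᵀ) := by
      rw [← Matrix.mul_assoc, ← Matrix.mul_assoc, hRinvR]
    simp only [Matrix.transpose_mul, Matrix.transpose_transpose, hRinvT, Matrix.mul_assoc]
    rw [h2']
  have hpt : ∀ t, u t ⬝ᵥ R.mulVec (u t) = w ⬝ᵥ (M t).mulVec w := by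
    intro t
    have hexpT : NormedSpace.exp ((τ₁ - t) • Aᵀ) =
        (NormedSpace.exp ((τ₁ - t) • A))ᵀ := by
      rw [← Matrix.transpose_smul, Matrix.exp_transpose]
    simp only [hM]
    rw [hu t, hexpT, quad_mulVec, halg]
  -- integrability of the Gramian integrand
  have hexpcont : Continuous fun s : ℝ => NormedSpace.exp ((τ₁ - s) • A) := by
    letI : NormedRing (Matrix (Fin n) (Fin n) ℝ) := Matrix.linftyOpNormedRing
    letI : NormedAlgebra ℝ (Matrix (Fin n) (Fin n) ℝ) := Matrix.linftyOpNormedAlgebra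
    letI : NormedAlgebra ℚ (Matrix (Fin n) (Fin n) ℝ) := Matrix.linftyOpNormedAlgebra
    have hc := @NormedSpace.exp_continuous (Matrix (Fin n) (Fin n) ℝ) _ _
      (by exact (inferInstance : CompleteSpace (Fin n → Fin n → ℝ)))
    exact hc.comp
      ((continuous_const.sub continuous_id).smul continuous_const)
  have hexpcont' : Continuous fun s : ℝ => NormedSpace.exp ((τ₁ - s) • Aᵀ) := by
    letI : NormedRing (Matrix (Fin n) (Fin n) ℝ) := Matrix.linftyOpNormedRing
    letI : NormedAlgebra ℝ (Matrix (Fin n) (Fin n) ℝ) := Matrix.linftyOpNormedAlgebra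
    letI : NormedAlgebra ℚ (Matrix (Fin n) (Fin n) ℝ) := Matrix.linftyOpNormedAlgebra
    have hc := @NormedSpace.exp_continuous (Matrix (Fin n) (Fin n) ℝ) _ _
      (by exact (inferInstance : CompleteSpace (Fin n → Fin n → ℝ)))
    exact hc.comp
      ((continuous_const.sub continuous_id).smul continuous_const)
  have hMcont : Continuous M :=
    ((((hexpcont.matrix_mul continuous_const).matrix_mul continuous_const).matrix_mul
      continuous_const).matrix_mul hexpcont')
  have hMint := Continuous.intervalIntegrable (E := Matrix (Fin n) (Fin n) ℝ) (μ := volume) hMcont 0 τ₁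
  -- the quadratic form as a continuous linear map in the matrix argument
  let L₀ : Matrix (Fin n) (Fin n) ℝ →ₗ[ℝ] ℝ :=
    { toFun := fun X => w ⬝ᵥ X.mulVec w
      map_add' := fun X Y => by simp [Matrix.add_mulVec, dotProduct_add]
      map_smul' := fun c X => by simp [Matrix.smul_mulVec, dotProduct_smul] }
  let L : Matrix (Fin n) (Fin n) ℝ →L[ℝ] ℝ := LinearMap.toContinuousLinearMap L₀
  have key : L (∫ s in (0:ℝ)..τ₁, M s) = ∫ s in (0:ℝ)..τ₁, L (M s) :=
    (L.intervalIntegral_comp_comm hMint).symm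
  have hGint : G = ∫ s in (0:ℝ)..τ₁, M s := rfl
  have hLG : L G = w ⬝ᵥ G.mulVec w := rfl
  -- put everything together
  have hGw : G.mulVec w = v := by
    rw [hw, Matrix.mulVec_mulVec, Matrix.mul_nonsing_inv G
      ((Matrix.isUnit_iff_isUnit_det G).mp hG), Matrix.one_mulVec]
  calc (∫ t in (0:ℝ)..τ₁, u t ⬝ᵥ R.mulVec (u t))
      = ∫ t in (0:ℝ)..τ₁, L (M t) := by
        apply intervalIntegral.integral_congr
        intro t _
        exact hpt t
    _ = L G := by rw [hGint, key]
    _ = w ⬝ᵥ v := by rw [hLG, hGw]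
    _ = v ⬝ᵥ w := dotProduct_comm w v
end

section
/- Derivative of the arrival-time cost (the formula for ċ[τ₁] used to compute the optimal arrival time): Let τ > 0 and x₁ ∈ ℝⁿ, suppose G(τ) is invertible, let μ₁ > 0, and define e(σ) = G(σ)⁻¹ (x₁ − x̂(σ)) and c(σ) = μ₁ (σ + (x₁ − x̂(σ))ᵀ G(σ)⁻¹ (x₁ − x̂(σ))) for σ near τ. Then c is differentiable at τ with c′(τ) = μ₁ (1 − 2 (A x₁ + d)ᵀ e(τ) − e(τ)ᵀ B R⁻¹ Bᵀ e(τ)). -/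
open MeasureTheory Matrix

attribute [local instance] Matrix.normedAddCommGroup Matrix.normedSpace

namespace ArrivalAux

open NormedSpace intervalIntegral

/-- The integrand of the Gramian after the change of variables `u = τ - s`. -/
noncomputable def gfun {n : ℕ} (A Mc : Matrix (Fin n) (Fin n) ℝ) (u : ℝ) :
    Matrix (Fin n) (Fin n) ℝ :=
  NormedSpace.exp (u • A) * Mc * NormedSpace.exp (u • Aᵀ)

section SupWorld

variable {n m : ℕ} (A : Matrix (Fin n) (Fin n) ℝ) (B : Matrix (Fin n) (Fin m) ℝ)
    (R : Matrix (Fin m) (Fin m) ℝ)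

theorem gramian_eq (σ : ℝ) :
    gramian A B R σ = ∫ u in (0:ℝ)..σ, gfun A (B * R⁻¹ * Bᵀ) u := by
  unfold gramian gfun
  have h := intervalIntegral.integral_comp_sub_left
    (fun u : ℝ => NormedSpace.exp (u • A) * (B * R⁻¹ * Bᵀ) * NormedSpace.exp (u • Aᵀ)) σ
    (a := 0) (b := σ)
  simp only [sub_zero, sub_self] at h
  rw [← h]
  simp only [Matrix.mul_assoc]

theorem gramian_zero : gramian A B R 0 = 0 := by
  unfold gramian; exact intervalIntegral.integral_same

theorem gramian_hasDerivAt_sup (hcont : Continuous (gfun A (B * R⁻¹ * Bᵀ))) (σ₀ : ℝ) :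
    HasDerivAt (gramian A B R) (gfun A (B * R⁻¹ * Bᵀ) σ₀) σ₀ := by
  haveI : TopologicalSpace.PseudoMetrizableSpace (Matrix (Fin n) (Fin n) ℝ) :=
    inferInstanceAs (TopologicalSpace.PseudoMetrizableSpace (Fin n → Fin n → ℝ))
  have h : HasDerivAt (fun σ => ∫ u in (0:ℝ)..σ, gfun A (B * R⁻¹ * Bᵀ) u)
      (gfun A (B * R⁻¹ * Bᵀ) σ₀) σ₀ :=
    intervalIntegral.integral_hasDerivAt_right (hcont.intervalIntegrable _ _)
      (hcont.stronglyMeasurable.stronglyMeasurableAtFilter) hcont.continuousAt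
  exact h.congr_of_eventuallyEq (Filter.Eventually.of_forall fun σ => (gramian_eq A B R σ))

theorem gramian_slope_sup (hcont : Continuous (gfun A (B * R⁻¹ * Bᵀ))) (σ₀ : ℝ) :
    Filter.Tendsto (slope (gramian A B R) σ₀) (nhdsWithin σ₀ {σ₀}ᶜ)
      (nhds (gfun A (B * R⁻¹ * Bᵀ) σ₀)) :=
  hasDerivAt_iff_tendsto_slope.mp (gramian_hasDerivAt_sup A B R hcont σ₀)

theorem gramian_transpose (hR : Rᵀ = R) (hcont : Continuous (gfun A (B * R⁻¹ * Bᵀ))) (σ : ℝ) :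
    (gramian A B R σ)ᵀ = gramian A B R σ := by
  have hMc : (B * R⁻¹ * Bᵀ)ᵀ = B * R⁻¹ * Bᵀ := by
    have hRi : (R⁻¹)ᵀ = R⁻¹ := by rw [Matrix.transpose_nonsing_inv, hR]
    simp [Matrix.transpose_mul, hRi, Matrix.mul_assoc]
  have hg : ∀ u, (gfun A (B * R⁻¹ * Bᵀ) u)ᵀ = gfun A (B * R⁻¹ * Bᵀ) u := by
    intro u
    unfold gfun
    rw [Matrix.transpose_mul, Matrix.transpose_mul, hMc]
    rw [show (u • Aᵀ) = (u • A)ᵀ by rw [Matrix.transpose_smul]]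
    rw [Matrix.exp_transpose, Matrix.transpose_transpose]
    simp only [Matrix.mul_assoc]
  let T : Matrix (Fin n) (Fin n) ℝ →L[ℝ] Matrix (Fin n) (Fin n) ℝ :=
    LinearMap.toContinuousLinearMap (Matrix.transposeLinearEquiv (Fin n) (Fin n) ℝ ℝ).toLinearMap
  have hT : ∀ X, T X = Xᵀ := fun _ => rfl
  rw [gramian_eq, ← hT]
  erw [← T.intervalIntegral_comp_comm (hcont.intervalIntegrable _ _)]
  exact intervalIntegral.integral_congr fun u _ => hg u

end SupWorld

section LinftyWorld

attribute [local instance 2000] Matrix.linftyOpNormedAddCommGroup Matrix.linftyOpNormedSpace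
  Matrix.linftyOpNormedRing Matrix.linftyOpNormedAlgebra

variable {n m : ℕ} (A : Matrix (Fin n) (Fin n) ℝ) (B : Matrix (Fin n) (Fin m) ℝ)
    (R : Matrix (Fin m) (Fin m) ℝ)

theorem gfun_eq (Mc : Matrix (Fin n) (Fin n) ℝ) (u : ℝ) :
    gfun A Mc u = NormedSpace.exp (u • A) * Mc * NormedSpace.exp (u • Aᵀ) := rfl

theorem exp_hasDerivAt (C : Matrix (Fin n) (Fin n) ℝ) (t : ℝ) :
    HasDerivAt (fun u : ℝ => NormedSpace.exp (u • C)) (C * NormedSpace.exp (t • C)) t :=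
  hasDerivAt_exp_smul_const' C t

theorem exp_hasDerivAt' (C : Matrix (Fin n) (Fin n) ℝ) (t : ℝ) :
    HasDerivAt (fun u : ℝ => NormedSpace.exp (u • C)) (NormedSpace.exp (t • C) * C) t :=
  hasDerivAt_exp_smul_const C t

theorem exp_cont (C : Matrix (Fin n) (Fin n) ℝ) :
    Continuous (fun u : ℝ => NormedSpace.exp (u • C)) :=
  exp_continuous.comp (continuous_id.smul continuous_const)

theorem gfun_cont (Mc : Matrix (Fin n) (Fin n) ℝ) : Continuous (gfun A Mc) := by
  have : Continuous fun u : ℝ =>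
      NormedSpace.exp (u • A) * Mc * NormedSpace.exp (u • Aᵀ) :=
    ((exp_cont A).mul continuous_const).mul (exp_cont Aᵀ)
  exact this

theorem gfun_hasDerivAt (Mc : Matrix (Fin n) (Fin n) ℝ) (u : ℝ) :
    HasDerivAt (gfun A Mc) (A * gfun A Mc u + gfun A Mc u * Aᵀ) u := by
  have h := ((exp_hasDerivAt A u).mul (hasDerivAt_const u Mc)).mul (exp_hasDerivAt' Aᵀ u)
  have e : (A * NormedSpace.exp (u • A) * Mc + NormedSpace.exp (u • A) * 0) *
        NormedSpace.exp (u • Aᵀ) +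
      NormedSpace.exp (u • A) * Mc * (NormedSpace.exp (u • Aᵀ) * Aᵀ)
      = A * gfun A Mc u + gfun A Mc u * Aᵀ := by
    rw [gfun_eq]; noncomm_ring
  exact h.congr_deriv e

theorem gramian_hasDerivAt (σ₀ : ℝ) :
    HasDerivAt (gramian A B R) (gfun A (B * R⁻¹ * Bᵀ) σ₀) σ₀ := by
  refine hasDerivAt_iff_tendsto_slope.mpr ?_
  exact gramian_slope_sup A B R (by exact gfun_cont A (B * R⁻¹ * Bᵀ)) σ₀

/-- The Lyapunov identity for the Gramian. -/
theorem lyapunov (σ : ℝ) :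
    gfun A (B * R⁻¹ * Bᵀ) σ
      = B * R⁻¹ * Bᵀ + A * gramian A B R σ + gramian A B R σ * Aᵀ := by
  set Mc := B * R⁻¹ * Bᵀ with hMc
  set φ : ℝ → Matrix (Fin n) (Fin n) ℝ :=
    fun u => gfun A Mc u - (Mc + A * gramian A B R u + gramian A B R u * Aᵀ) with hφ
  have hder : ∀ u, HasDerivAt φ 0 u := by
    intro u
    have h1 := gfun_hasDerivAt A Mc u
    have h2 : HasDerivAt (fun u => Mc + A * gramian A B R u + gramian A B R u * Aᵀ)
        (A * gfun A Mc u + gfun A Mc u * Aᵀ) u := by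
      have ha := (gramian_hasDerivAt A B R u).const_mul A
      have hb := (gramian_hasDerivAt A B R u).mul_const Aᵀ
      have := ((hasDerivAt_const u Mc).add ha).add hb
      exact this.congr_deriv (by rw [zero_add])
    have h3 := h1.sub h2
    rw [sub_self] at h3
    exact h3
  have hconst : φ σ = φ 0 := by
    refine is_const_of_fderiv_eq_zero (fun u => (hder u).differentiableAt) (fun u => ?_) σ 0
    have := (hder u).hasFDerivAt.fderiv
    refine this.trans ?_; ext v : 1; simp; rfl
  have hφ0 : φ 0 = 0 := by
    rw [hφ]
    simp only [gramian_zero, Matrix.mul_zero, Matrix.zero_mul, add_zero]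
    rw [gfun_eq]
    simp [NormedSpace.exp_zero]
  have := hconst.trans hφ0
  rw [hφ] at this
  exact sub_eq_zero.mp this

/-- mulVec by a fixed vector, as a continuous linear map in the matrix. -/
noncomputable def mvCLM (v : Fin n → ℝ) : Matrix (Fin n) (Fin n) ℝ →L[ℝ] (Fin n → ℝ) :=
  LinearMap.toContinuousLinearMap
    { toFun := fun X => X.mulVec v
      map_add' := fun X Y => Matrix.add_mulVec X Y v
      map_smul' := fun c X => smul_mulVec c X v }

theorem mvCLM_apply (v : Fin n → ℝ) (X : Matrix (Fin n) (Fin n) ℝ) : mvCLM v X = X.mulVec v :=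
  rfl

/-- Left-multiplication `w ↦ A *ᵥ w` as a continuous linear map. -/
noncomputable def lmulCLM : (Fin n → ℝ) →L[ℝ] (Fin n → ℝ) :=
  LinearMap.toContinuousLinearMap A.mulVecLin

theorem lmulCLM_apply (w : Fin n → ℝ) : lmulCLM A w = A.mulVec w := rfl

theorem expVec_hasDerivAt (v : Fin n → ℝ) (t : ℝ) :
    HasDerivAt (fun u : ℝ => (NormedSpace.exp (u • A)).mulVec v)
      ((A * NormedSpace.exp (t • A)).mulVec v) t :=
  (mvCLM v).hasFDerivAt.comp_hasDerivAt t (exp_hasDerivAt A t)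

theorem expVec_cont (v : Fin n → ℝ) :
    Continuous (fun u : ℝ => (NormedSpace.exp (u • A)).mulVec v) :=
  (mvCLM v).continuous.comp (exp_cont A)

theorem freeResp_eq (x₀ d : Fin n → ℝ) (σ : ℝ) :
    freeResp A x₀ d σ = (NormedSpace.exp (σ • A)).mulVec x₀ +
      ∫ u in (0:ℝ)..σ, (NormedSpace.exp (u • A)).mulVec d := by
  have h := intervalIntegral.integral_comp_sub_left
    (fun u : ℝ => (NormedSpace.exp (u • A)).mulVec d) σ (a := 0) (b := σ)
  simp only [sub_zero, sub_self] at h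
  show freeResp A x₀ d σ = _
  unfold freeResp
  rw [← h]

theorem freeResp_hasDerivAt (x₀ d : Fin n → ℝ) (σ₀ : ℝ) :
    HasDerivAt (freeResp A x₀ d) (A.mulVec (freeResp A x₀ d σ₀) + d) σ₀ := by
  have h1 := expVec_hasDerivAt A x₀ σ₀
  have h2 : HasDerivAt (fun σ => ∫ u in (0:ℝ)..σ, (NormedSpace.exp (u • A)).mulVec d)
      ((NormedSpace.exp (σ₀ • A)).mulVec d) σ₀ :=
    intervalIntegral.integral_hasDerivAt_right
      ((expVec_cont A d).intervalIntegrable _ _)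
      ((expVec_cont A d).stronglyMeasurable.stronglyMeasurableAtFilter)
      (expVec_cont A d).continuousAt
  have h := (h1.add h2).congr_of_eventuallyEq
    (Filter.Eventually.of_forall fun σ => (freeResp_eq A x₀ d σ))
  -- identify the derivative
  have key : A.mulVec (freeResp A x₀ d σ₀) + d
      = (A * NormedSpace.exp (σ₀ • A)).mulVec x₀ + (NormedSpace.exp (σ₀ • A)).mulVec d := by
    rw [freeResp_eq]
    have hint : A.mulVec (∫ u in (0:ℝ)..σ₀, (NormedSpace.exp (u • A)).mulVec d)
        = (NormedSpace.exp (σ₀ • A)).mulVec d - d := by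
      have hiint : IntervalIntegrable (fun u : ℝ => (NormedSpace.exp (u • A)).mulVec d)
          MeasureTheory.volume 0 σ₀ := (expVec_cont A d).intervalIntegrable 0 σ₀
      have hcomm := (lmulCLM A).intervalIntegral_comp_comm hiint
      have hftc : (∫ u in (0:ℝ)..σ₀, (A * NormedSpace.exp (u • A)).mulVec d)
          = (NormedSpace.exp (σ₀ • A)).mulVec d - (NormedSpace.exp ((0:ℝ) • A)).mulVec d := by
        have hcont2 : Continuous fun u : ℝ => (A * NormedSpace.exp (u • A)).mulVec d :=
          (mvCLM d).continuous.comp (continuous_const.mul (exp_cont A))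
        exact intervalIntegral.integral_eq_sub_of_hasDerivAt
          (fun u _ => expVec_hasDerivAt A d u) (hcont2.intervalIntegrable _ _)
      have hmv : ∀ u : ℝ, lmulCLM A ((NormedSpace.exp (u • A)).mulVec d)
          = (A * NormedSpace.exp (u • A)).mulVec d := by
        intro u; rw [lmulCLM_apply, Matrix.mulVec_mulVec]
      rw [show A.mulVec (∫ u in (0:ℝ)..σ₀, (NormedSpace.exp (u • A)).mulVec d)
          = lmulCLM A (∫ u in (0:ℝ)..σ₀, (NormedSpace.exp (u • A)).mulVec d) from rfl]
      rw [← hcomm]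
      simp_rw [hmv]
      rw [hftc]
      simp [NormedSpace.exp_zero]
    rw [Matrix.mulVec_add, hint, Matrix.mulVec_mulVec]
    abel
  rw [key]
  exact h

theorem inv_hasDerivAt (τ : ℝ) (hG : IsUnit (gramian A B R τ)) :
    HasDerivAt (fun σ => (gramian A B R σ)⁻¹)
      (-((gramian A B R τ)⁻¹ * gfun A (B * R⁻¹ * Bᵀ) τ * (gramian A B R τ)⁻¹)) τ := by
  obtain ⟨u, hu⟩ := hG
  have hfd := hasFDerivAt_ringInverse (𝕜 := ℝ) u
  rw [hu] at hfd
  have h := hfd.comp_hasDerivAt τ (gramian_hasDerivAt A B R τ)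
  have hinv : (↑u⁻¹ : Matrix (Fin n) (Fin n) ℝ) = (gramian A B R τ)⁻¹ := by
    rw [← hu, ← Matrix.coe_units_inv]
  have heq : ∀ σ, Ring.inverse (gramian A B R σ) = (gramian A B R σ)⁻¹ := fun σ =>
    (Matrix.nonsing_inv_eq_ringInverse _).symm
  have h2 := h.congr_of_eventuallyEq (Filter.Eventually.of_forall fun σ => (heq σ).symm)
  refine h2.congr_deriv ?_
  simp [ContinuousLinearMap.mulLeftRight_apply, hinv, Matrix.mul_assoc]

theorem entry_hasDerivAt {P : ℝ → Matrix (Fin n) (Fin n) ℝ} {P' : Matrix (Fin n) (Fin n) ℝ}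
    {τ : ℝ} (h : HasDerivAt P P' τ) (i j : Fin n) :
    HasDerivAt (fun σ => P σ i j) (P' i j) τ := by
  let L : Matrix (Fin n) (Fin n) ℝ →L[ℝ] ℝ :=
    LinearMap.toContinuousLinearMap
      { toFun := fun X => X i j
        map_add' := fun _ _ => rfl
        map_smul' := fun _ _ => rfl }
  exact L.hasFDerivAt.comp_hasDerivAt τ h

end LinftyWorld

theorem vec_entry_hasDerivAt {n : ℕ} {y : ℝ → Fin n → ℝ} {y' : Fin n → ℝ} {τ : ℝ}
    (h : HasDerivAt y y' τ) (i : Fin n) : HasDerivAt (fun σ => y σ i) (y' i) τ :=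
  (ContinuousLinearMap.proj (R := ℝ) (φ := fun _ : Fin n => ℝ) i).hasFDerivAt.comp_hasDerivAt τ h

theorem hasDerivAt_quadForm {n : ℕ} {y : ℝ → Fin n → ℝ} {P : ℝ → Matrix (Fin n) (Fin n) ℝ}
    {y' : Fin n → ℝ} {P' : Matrix (Fin n) (Fin n) ℝ} {τ : ℝ}
    (hy : ∀ i, HasDerivAt (fun σ => y σ i) (y' i) τ)
    (hP : ∀ i j, HasDerivAt (fun σ => P σ i j) (P' i j) τ) :
    HasDerivAt (fun σ => y σ ⬝ᵥ (P σ).mulVec (y σ))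
      (y' ⬝ᵥ (P τ).mulVec (y τ) + y τ ⬝ᵥ P'.mulVec (y τ) + y τ ⬝ᵥ (P τ).mulVec y') τ := by
  simp only [dotProduct, mulVec]
  have h : ∀ i ∈ Finset.univ, HasDerivAt (fun σ => y σ i * ∑ j, P σ i j * y σ j)
      (y' i * (∑ j, P τ i j * y τ j) +
        y τ i * (∑ j, (P' i j * y τ j + P τ i j * y' j))) τ := by
    intro i _
    exact (hy i).mul (HasDerivAt.fun_sum fun j _ => ((hP i j).mul (hy j)))
  have hs := HasDerivAt.fun_sum h
  refine hs.congr_deriv (Eq.symm ?_)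
  rw [← Finset.sum_add_distrib, ← Finset.sum_add_distrib]
  refine Finset.sum_congr rfl fun i _ => ?_
  rw [Finset.sum_add_distrib, mul_add, Finset.mul_sum, Finset.mul_sum, Finset.mul_sum]
  ring

/-- Pure matrix algebra certificate for the derivative of the quadratic form. -/
theorem quad_cert {n : ℕ} (Amat G Mc gm Nm : Matrix (Fin n) (Fin n) ℝ)
    (yv ev w : Fin n → ℝ)
    (hNsym : Nmᵀ = Nm) (hGsym : Gᵀ = G)
    (hev : ev = Nm.mulVec yv) (hGe : G.mulVec ev = yv)
    (hlyap : gm = Mc + Amat * G + G * Amatᵀ) :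
    (-w) ⬝ᵥ Nm.mulVec yv + yv ⬝ᵥ (-(Nm * gm * Nm)).mulVec yv + yv ⬝ᵥ Nm.mulVec (-w)
      = -(2 * ((w + Amat.mulVec yv) ⬝ᵥ ev)) - ev ⬝ᵥ Mc.mulVec ev := by
  have hdotN : ∀ z, yv ⬝ᵥ Nm.mulVec z = ev ⬝ᵥ z := by
    intro z
    rw [Matrix.dotProduct_mulVec, hev]
    congr 1
    conv_lhs => rw [← hNsym]
    rw [Matrix.vecMul_transpose]
  have hdotG : ∀ z, ev ⬝ᵥ G.mulVec z = yv ⬝ᵥ z := by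
    intro z
    rw [Matrix.dotProduct_mulVec]
    congr 1
    conv_lhs => rw [← hGsym]
    rw [Matrix.vecMul_transpose, hGe]
  have ht2 : yv ⬝ᵥ (-(Nm * gm * Nm)).mulVec yv
      = -(ev ⬝ᵥ Mc.mulVec ev + ev ⬝ᵥ Amat.mulVec yv + (Amat.mulVec yv) ⬝ᵥ ev) := by
    rw [Matrix.neg_mulVec, dotProduct_neg]
    congr 1
    rw [← Matrix.mulVec_mulVec, ← Matrix.mulVec_mulVec, ← hev, hdotN]
    rw [hlyap, Matrix.add_mulVec, Matrix.add_mulVec, dotProduct_add,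
      dotProduct_add]
    congr 1
    · congr 1
      rw [← Matrix.mulVec_mulVec, hGe]
    · rw [← Matrix.mulVec_mulVec, hdotG, Matrix.dotProduct_mulVec, Matrix.vecMul_transpose]
  have ht1 : (-w) ⬝ᵥ Nm.mulVec yv = -(w ⬝ᵥ ev) := by
    rw [neg_dotProduct, ← hev]
  have ht3 : yv ⬝ᵥ Nm.mulVec (-w) = -(w ⬝ᵥ ev) := by
    rw [hdotN, dotProduct_neg, dotProduct_comm]
  rw [ht1, ht2, ht3]
  have hcomm : ev ⬝ᵥ Amat.mulVec yv = (Amat.mulVec yv) ⬝ᵥ ev := dotProduct_comm _ _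
  rw [hcomm, add_dotProduct]
  ring

section LinftyWorld2

attribute [local instance 2000] Matrix.linftyOpNormedAddCommGroup Matrix.linftyOpNormedSpace
  Matrix.linftyOpNormedRing Matrix.linftyOpNormedAlgebra

theorem cost_hasDerivAt {n m : ℕ} (A : Matrix (Fin n) (Fin n) ℝ) (B : Matrix (Fin n) (Fin m) ℝ)
    (R : Matrix (Fin m) (Fin m) ℝ) (x₀ d x₁ : Fin n → ℝ) (τ : ℝ) (hRs : Rᵀ = R)
    (hG : IsUnit (gramian A B R τ)) :
    HasDerivAt (fun σ => σ + (x₁ - freeResp A x₀ d σ) ⬝ᵥ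
        (gramian A B R σ)⁻¹.mulVec (x₁ - freeResp A x₀ d σ))
      (1 - 2 * ((A.mulVec x₁ + d) ⬝ᵥ (gramian A B R τ)⁻¹.mulVec (x₁ - freeResp A x₀ d τ))
        - (gramian A B R τ)⁻¹.mulVec (x₁ - freeResp A x₀ d τ) ⬝ᵥ
          (B * R⁻¹ * Bᵀ).mulVec ((gramian A B R τ)⁻¹.mulVec (x₁ - freeResp A x₀ d τ))) τ := by
  have hyd : HasDerivAt (fun σ => x₁ - freeResp A x₀ d σ)
      (-(A.mulVec (freeResp A x₀ d τ) + d)) τ := by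
    have h := (hasDerivAt_const τ x₁).sub (freeResp_hasDerivAt A x₀ d τ)
    rw [zero_sub] at h
    exact h
  have hNd := inv_hasDerivAt A B R τ hG
  have hq := hasDerivAt_quadForm (fun i => vec_entry_hasDerivAt hyd i)
    (fun i j => entry_hasDerivAt hNd i j)
  have hsum := (hasDerivAt_id τ).add hq
  refine hsum.congr_deriv (Eq.symm ?_)
  have hGdet : IsUnit (gramian A B R τ).det := (Matrix.isUnit_iff_isUnit_det _).mp hG
  have hGsym : (gramian A B R τ)ᵀ = gramian A B R τ :=
    gramian_transpose A B R hRs (by exact gfun_cont A (B * R⁻¹ * Bᵀ)) τ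
  have hNsym : ((gramian A B R τ)⁻¹)ᵀ = (gramian A B R τ)⁻¹ := by
    rw [Matrix.transpose_nonsing_inv, hGsym]
  have hGe : (gramian A B R τ).mulVec ((gramian A B R τ)⁻¹.mulVec (x₁ - freeResp A x₀ d τ))
      = x₁ - freeResp A x₀ d τ := by
    rw [Matrix.mulVec_mulVec, Matrix.mul_nonsing_inv _ hGdet, Matrix.one_mulVec]
  have hcert := quad_cert A (gramian A B R τ) (B * R⁻¹ * Bᵀ) (gfun A (B * R⁻¹ * Bᵀ) τ)
    ((gramian A B R τ)⁻¹) (x₁ - freeResp A x₀ d τ)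
    ((gramian A B R τ)⁻¹.mulVec (x₁ - freeResp A x₀ d τ))
    (A.mulVec (freeResp A x₀ d τ) + d) hNsym hGsym rfl hGe (lyapunov A B R τ)
  have hw : A.mulVec (freeResp A x₀ d τ) + d + A.mulVec (x₁ - freeResp A x₀ d τ)
      = A.mulVec x₁ + d := by
    rw [Matrix.mulVec_sub]; abel
  rw [hw] at hcert
  show _ = (1 : ℝ) + _
  rw [hcert]
  ring

end LinftyWorld2

end ArrivalAux

/-- Derivative of the arrival-time cost
`c(σ) = μ₁ (σ + (x₁ − x̂(σ))ᵀ G(σ)⁻¹ (x₁ − x̂(σ)))`: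
`c′(τ) = μ₁ (1 − 2 (A x₁ + d)ᵀ e(τ) − e(τ)ᵀ B R⁻¹ Bᵀ e(τ))`, where
`e(σ) = G(σ)⁻¹ (x₁ − x̂(σ))`. -/
theorem arrival_time_cost_deriv {n m : ℕ}
    (A : Matrix (Fin n) (Fin n) ℝ) (B : Matrix (Fin n) (Fin m) ℝ)
    (R : Matrix (Fin m) (Fin m) ℝ) (hR : R.PosDef) (x₀ d x₁ : Fin n → ℝ)
    (τ : ℝ) (hτ : 0 < τ) (hG : IsUnit (gramian A B R τ))
    (μ₁ : ℝ) (hμ₁ : 0 < μ₁)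
    (e : ℝ → Fin n → ℝ)
    (he : ∀ σ, e σ = (gramian A B R σ)⁻¹.mulVec (x₁ - freeResp A x₀ d σ))
    (c : ℝ → ℝ)
    (hc : ∀ σ, c σ = μ₁ * (σ + (x₁ - freeResp A x₀ d σ) ⬝ᵥ
      (gramian A B R σ)⁻¹.mulVec (x₁ - freeResp A x₀ d σ))) :
    HasDerivAt c
      (μ₁ * (1 - 2 * ((A.mulVec x₁ + d) ⬝ᵥ e τ) - e τ ⬝ᵥ (B * R⁻¹ * Bᵀ).mulVec (e τ))) τ := by
  have hRs : Rᵀ = R := by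
    have h := hR.1.eq
    rwa [Matrix.conjTranspose_eq_transpose_of_trivial] at h
  have hmain := ArrivalAux.cost_hasDerivAt A B R x₀ d x₁ τ hRs hG
  have hcf : c = fun σ => μ₁ * (σ + (x₁ - freeResp A x₀ d σ) ⬝ᵥ
      (gramian A B R σ)⁻¹.mulVec (x₁ - freeResp A x₀ d σ)) := funext hc
  rw [hcf, he τ]
  exact hmain.const_mul μ₁
end
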